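/- In the same gradient-ascent setting, after the update w' = w + η(p - e_{y⁻})hᵀ, the logit of each class i ≠ y⁻ changes by η p_i ‖h‖², and the logit of y⁻ changes by η (p_{y⁻}-1) ‖h‖²; consequently, among classes i ≠ y⁻, the ratio p'_i/p_i is maximized at the class y* = argmax_{i ≠ y⁻} p_i, and p'_{y*} > p_{y*}. -/

import Mathlib

/-- Softmax. -/
noncomputable def softmax {V : ℕ} (z : Fin V → ℝ) : Fin V → ℝ :=
  fun i => Real.exp (z i) / ∑ j, Real.exp (z j)

/-- One-hot vector of a label. -/
def oneHot {V : ℕ} (y : Fin V) : Fin V → ℝ := fun i => if i = y then 1 else 0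

/-- After the gradient-ascent update `w' = w + η(p - e_{y⁻})hᵀ`, the logit of each
class `i ≠ y⁻` changes by `η p_i ‖h‖²`, the logit of `y⁻` changes by
`η(p_{y⁻} - 1)‖h‖²`; among classes `i ≠ y⁻` the ratio `p'_i/p_i` is (strictly)
maximized at the class `y*` with maximal `p_i`, and `p'_{y*} > p_{y*}`. -/
theorem gradient_ascent_squeezing {V d : ℕ} (hV : 3 ≤ V)
    (w : Matrix (Fin V) (Fin d) ℝ) (h : Fin d → ℝ) (hh : h ≠ 0)
    (yneg ystar : Fin V) (hne : ystar ≠ yneg) (η : ℝ) (hη : 0 < η)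
    (p : Fin V → ℝ) (hp : p = softmax (w.mulVec h))
    (hmax : ∀ i, i ≠ yneg → i ≠ ystar → p i < p ystar)
    (w' : Matrix (Fin V) (Fin d) ℝ)
    (hw' : w' = w + η • Matrix.vecMulVec (p - oneHot yneg) h)
    (p' : Fin V → ℝ) (hp' : p' = softmax (w'.mulVec h)) :
    (∀ i, i ≠ yneg → w'.mulVec h i - w.mulVec h i = η * p i * ∑ j, (h j) ^ 2)
    ∧ (w'.mulVec h yneg - w.mulVec h yneg = η * (p yneg - 1) * ∑ j, (h j) ^ 2)
    ∧ (∀ i, i ≠ yneg → i ≠ ystar → p' i / p i < p' ystar / p ystar)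
    ∧ p ystar < p' ystar := by
  have hVpos : 0 < V := by omega
  haveI : NeZero V := ⟨by omega⟩
  set z := w.mulVec h with hz
  set H := ∑ j, (h j) ^ 2 with hHdef
  have hH : 0 < H := by
    obtain ⟨j, hj⟩ : ∃ j, h j ≠ 0 := by
      by_contra hc; push_neg at hc; exact hh (funext hc)
    exact Finset.sum_pos' (fun i _ => sq_nonneg _) ⟨j, Finset.mem_univ j, by positivity⟩
  -- logit change
  have hlog : ∀ i, w'.mulVec h i = z i + η * (p i - oneHot yneg i) * H := by
    intro i
    rw [hz]
    simp only [hw', Matrix.mulVec, dotProduct, Matrix.add_apply,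
      Matrix.smul_apply, Matrix.vecMulVec_apply, Pi.sub_apply, smul_eq_mul]
    rw [hHdef, Finset.mul_sum, ← Finset.sum_add_distrib]
    apply Finset.sum_congr rfl
    intro j _
    ring
  have hS : 0 < ∑ j, Real.exp (z j) :=
    Finset.sum_pos (fun j _ => Real.exp_pos _) ⟨⟨0, hVpos⟩, Finset.mem_univ _⟩
  have hppos : ∀ i, 0 < p i := by
    intro i; rw [hp]; exact div_pos (Real.exp_pos _) hS
  have hp1 : ∀ i, p i ≤ 1 := by
    intro i
    rw [hp]
    unfold softmax
    rw [div_le_one hS]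
    exact Finset.single_le_sum (fun j _ => (Real.exp_pos (z j)).le) (Finset.mem_univ i)
  set z' := w'.mulVec h with hz'
  have hS' : 0 < ∑ j, Real.exp (z' j) :=
    Finset.sum_pos (fun j _ => Real.exp_pos _) ⟨⟨0, hVpos⟩, Finset.mem_univ _⟩
  set S := ∑ j, Real.exp (z j) with hSdef
  set S' := ∑ j, Real.exp (z' j) with hS'def
  -- coefficient bound
  have hc : ∀ j, p j - oneHot yneg j ≤ p ystar := by
    intro j
    by_cases hj : j = yneg
    · rw [hj]
      simp [oneHot]
      linarith [hppos ystar, hp1 yneg]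
    · simp only [oneHot, if_neg hj]
      by_cases hjs : j = ystar
      · subst hjs; linarith
      · linarith [hmax j hj hjs]
  have hcneg : p yneg - oneHot yneg yneg < p ystar := by
    simp [oneHot]
    linarith [hppos ystar, hp1 yneg]
  -- key sum bound
  have hSlt : S' < Real.exp (η * p ystar * H) * S := by
    rw [hSdef, hS'def, Finset.mul_sum]
    apply Finset.sum_lt_sum
    · intro j _
      rw [hlog j, Real.exp_add, mul_comm (Real.exp (z j))]
      apply mul_le_mul_of_nonneg_right _ (Real.exp_pos _).le
      apply Real.exp_le_exp.mpr
      gcongr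
      exact hc j
    · refine ⟨yneg, Finset.mem_univ _, ?_⟩
      rw [hlog yneg, Real.exp_add, mul_comm (Real.exp (z yneg))]
      apply mul_lt_mul_of_pos_right _ (Real.exp_pos _)
      apply Real.exp_lt_exp.mpr
      have h1 : η * (p yneg - oneHot yneg yneg) < η * p ystar :=
        mul_lt_mul_of_pos_left hcneg hη
      exact mul_lt_mul_of_pos_right h1 hH
  -- ratio formula
  have hratio : ∀ i, i ≠ yneg → p' i / p i = Real.exp (η * p i * H) * (S / S') := by
    intro i hi
    rw [hp']
    conv_lhs => rw [hp]
    unfold softmax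
    rw [← hSdef, ← hS'def, hlog i]
    simp only [oneHot, if_neg hi, sub_zero, Real.exp_add]
    rw [div_div_div_eq]
    field_simp
  refine ⟨?_, ?_, ?_, ?_⟩
  · intro i hi
    rw [hlog i]
    simp only [oneHot, if_neg hi, sub_zero]
    ring
  · have h1 : oneHot yneg yneg = 1 := by simp [oneHot]
    rw [hlog yneg, h1]
    ring
  · intro i hi his
    rw [hratio i hi, hratio ystar hne]
    apply mul_lt_mul_of_pos_right _ (div_pos hS hS')
    refine Real.exp_lt_exp.mpr (mul_lt_mul_of_pos_right (mul_lt_mul_of_pos_left (hmax i hi his) hη) hH)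
  · rw [← one_lt_div (hppos ystar), hratio ystar hne]
    rw [show Real.exp (η * p ystar * H) * (S / S') = Real.exp (η * p ystar * H) * S / S' by ring]
    rw [lt_div_iff₀ hS', one_mul]
    exact hSlt
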